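/- Every matrix S in SL_3(ℝ) can be written as a product S = AN, where A belongs to the subgroup A2 of matrices of the form [[a,b,0],[c,d,0],[x,y,(ad−bc)^{−1}]] with ad − bc ≠ 0, and N is one of the matrices N1(c1,c2) = [[1,0,c1],[0,1,c2],[0,0,1]], N2(c1,c2) = [[−1,c1,0],[0,c2,1],[0,1,0]], or N3(c1,c2) = [[c1,0,−1],[c2,1,0],[1,0,0]] for some real c1, c2. -/

import Mathlib

open Matrix

private theorem sl3_case1 (s00 s01 s02 s10 s11 s12 s20 s21 s22 : ℝ)
    (hS : s00*s11*s22 - s00*s12*s21 - s01*s10*s22 + s01*s12*s20 + s02*s10*s21 - s02*s11*s20 = 1)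
    (h1 : s00 * s11 - s01 * s10 ≠ 0) :
    !![s00,s01,s02;s10,s11,s12;s20,s21,s22] =
      !![s00, s01, 0; s10, s11, 0; s20, s21, (s00 * s11 - s01 * s10)⁻¹] *
        !![1, 0, (s11 * s02 - s01 * s12) / (s00 * s11 - s01 * s10);
           0, 1, (s00 * s12 - s10 * s02) / (s00 * s11 - s01 * s10); 0, 0, 1] := by
  have h1a : s11 * s00 - s10 * s01 ≠ 0 := fun h => h1 (by linarith)
  have h1b : s11 * s00 - s01 * s10 ≠ 0 := fun h => h1 (by linarith)
  rw [Matrix.mul_fin_three]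
  ext i j
  fin_cases i <;> fin_cases j <;> simp <;> field_simp [h1a, h1b] <;>
    first
    | ring1
    | linear_combination hS
    | linear_combination -hS
    | linear_combination (s00 * s11 - s01 * s10) * hS
    | linear_combination (-(s00 * s11 - s01 * s10)) * hS
    | linear_combination (s00 * s11 - s01 * s10)^2 * hS
    | linear_combination (-(s00 * s11 - s01 * s10)^2) * hS

private theorem sl3_case2 (s00 s01 s02 s10 s11 s12 s20 s21 s22 : ℝ)
    (hS : s00*s11*s22 - s00*s12*s21 - s01*s10*s22 + s01*s12*s20 + s02*s10*s21 - s02*s11*s20 = 1)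
    (h2 : -s00 * s12 - s02 * -s10 ≠ 0) :
    !![s00,s01,s02;s10,s11,s12;s20,s21,s22] =
      !![-s00, s02, 0; -s10, s12, 0; -s20, s22, (-s00 * s12 - s02 * -s10)⁻¹] *
        !![-1, (s12 * s01 - s02 * s11) / (-s00 * s12 - s02 * -s10), 0;
           0, (-s00 * s11 - -s10 * s01) / (-s00 * s12 - s02 * -s10), 1; 0, 1, 0] := by
  have h2' : -(s00 * s12) + s10 * s02 ≠ 0 := fun h => h2 (by linarith)
  have h2'' : -(s00 * s12) + s02 * s10 ≠ 0 := fun h => h2 (by linarith)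
  have h2a : -(s12 * s00) + s10 * s02 ≠ 0 := fun h => h2 (by linarith)
  have h2b : -(s12 * s00) + s02 * s10 ≠ 0 := fun h => h2 (by linarith)
  rw [Matrix.mul_fin_three]
  ext i j
  fin_cases i <;> fin_cases j <;> simp <;> field_simp [h2', h2'', h2a, h2b] <;>
    first
    | ring1
    | linear_combination hS
    | linear_combination -hS
    | linear_combination (-(s00 * s12) + s02 * s10) * hS
    | linear_combination (-(-(s00 * s12) + s02 * s10)) * hS
    | linear_combination ((-(s00 * s12) + s02 * s10))^2 * hS
    | linear_combination (-((-(s00 * s12) + s02 * s10))^2) * hS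

private theorem sl3_case3 (s00 s01 s02 s10 s11 s12 s20 s21 s22 : ℝ)
    (hS : s00*s11*s22 - s00*s12*s21 - s01*s10*s22 + s01*s12*s20 + s02*s10*s21 - s02*s11*s20 = 1)
    (h3 : -s02 * s11 - s01 * -s12 ≠ 0) :
    !![s00,s01,s02;s10,s11,s12;s20,s21,s22] =
      !![-s02, s01, 0; -s12, s11, 0; -s22, s21, (-s02 * s11 - s01 * -s12)⁻¹] *
        !![(s11 * s00 - s01 * s10) / (-s02 * s11 - s01 * -s12), 0, -1;
           (-s02 * s10 - -s12 * s00) / (-s02 * s11 - s01 * -s12), 1, 0; 1, 0, 0] := by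
  have h3' : -(s02 * s11) + s01 * s12 ≠ 0 := fun h => h3 (by linarith)
  have h3'' : -(s02 * s11) + s12 * s01 ≠ 0 := fun h => h3 (by linarith)
  have h3a : -(s11 * s02) + s01 * s12 ≠ 0 := fun h => h3 (by linarith)
  have h3b : -(s11 * s02) + s12 * s01 ≠ 0 := fun h => h3 (by linarith)
  rw [Matrix.mul_fin_three]
  ext i j
  fin_cases i <;> fin_cases j <;> simp <;> field_simp [h3', h3'', h3a, h3b] <;>
    first
    | ring1
    | linear_combination hS
    | linear_combination -hS
    | linear_combination (-(s02 * s11) + s01 * s12) * hS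
    | linear_combination (-(-(s02 * s11) + s01 * s12)) * hS
    | linear_combination ((-(s02 * s11) + s01 * s12))^2 * hS
    | linear_combination (-((-(s02 * s11) + s01 * s12))^2) * hS

/-- every `S ∈ SL₃(ℝ)` factors as `S = A * N` with `A` in the affine
subgroup `A₂` and `N` one of `N₁(c₁,c₂)`, `N₂(c₁,c₂)`, `N₃(c₁,c₂)`. -/
theorem sl3_decomposition_A2 (S : Matrix (Fin 3) (Fin 3) ℝ) (hS : S.det = 1) :
    ∃ a b c d x y c1 c2 : ℝ, a * d - b * c ≠ 0 ∧
      (S = !![a, b, 0; c, d, 0; x, y, (a * d - b * c)⁻¹] * !![1, 0, c1; 0, 1, c2; 0, 0, 1] ∨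
       S = !![a, b, 0; c, d, 0; x, y, (a * d - b * c)⁻¹] * !![-1, c1, 0; 0, c2, 1; 0, 1, 0] ∨
       S = !![a, b, 0; c, d, 0; x, y, (a * d - b * c)⁻¹] * !![c1, 0, -1; c2, 1, 0; 1, 0, 0]) := by
  rw [det_fin_three] at hS
  by_cases h1 : S 0 0 * S 1 1 - S 0 1 * S 1 0 ≠ 0
  · refine ⟨S 0 0, S 0 1, S 1 0, S 1 1, S 2 0, S 2 1,
      (S 1 1 * S 0 2 - S 0 1 * S 1 2) / (S 0 0 * S 1 1 - S 0 1 * S 1 0),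
      (S 0 0 * S 1 2 - S 1 0 * S 0 2) / (S 0 0 * S 1 1 - S 0 1 * S 1 0), h1, Or.inl ?_⟩
    conv_lhs => rw [Matrix.eta_fin_three S]
    exact sl3_case1 _ _ _ _ _ _ _ _ _ hS h1
  · push_neg at h1
    by_cases h2 : -S 0 0 * S 1 2 - S 0 2 * -S 1 0 ≠ 0
    · refine ⟨-S 0 0, S 0 2, -S 1 0, S 1 2, -S 2 0, S 2 2,
        (S 1 2 * S 0 1 - S 0 2 * S 1 1) / (-S 0 0 * S 1 2 - S 0 2 * -S 1 0),
        (-S 0 0 * S 1 1 - -S 1 0 * S 0 1) / (-S 0 0 * S 1 2 - S 0 2 * -S 1 0),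
        h2, Or.inr (Or.inl ?_)⟩
      conv_lhs => rw [Matrix.eta_fin_three S]
      exact sl3_case2 _ _ _ _ _ _ _ _ _ hS h2
    · push_neg at h2
      have h3 : -S 0 2 * S 1 1 - S 0 1 * -S 1 2 ≠ 0 := by
        intro h3
        have : (1:ℝ) = 0 := by linear_combination -hS + S 2 0 * h3 + S 2 1 * h2 + S 2 2 * h1
        exact one_ne_zero this
      refine ⟨-S 0 2, S 0 1, -S 1 2, S 1 1, -S 2 2, S 2 1,
        (S 1 1 * S 0 0 - S 0 1 * S 1 0) / (-S 0 2 * S 1 1 - S 0 1 * -S 1 2),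
        (-S 0 2 * S 1 0 - -S 1 2 * S 0 0) / (-S 0 2 * S 1 1 - S 0 1 * -S 1 2),
        h3, Or.inr (Or.inr ?_)⟩
      conv_lhs => rw [Matrix.eta_fin_three S]
      exact sl3_case3 _ _ _ _ _ _ _ _ _ hS h3
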